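/- Monotonicity of batch-constrained soft policy iteration (first part of Theorem 1): let (π^k)_{k∈ℕ} be a sequence of policies such that for every k, the policy π^{k+1} maximizes the improvement objective of π^k at every state, i.e., for every state s and every policy π̃, J_{π^k}(π^{k+1}, s) ≥ J_{π^k}(π̃, s). Then for every k and every state-action pair (s,a), q^d_{π^{k+1}}(s,a) ≥ q^d_{π^k}(s,a). -/

import Mathlib

open Finset Filter Topology

def IsPolicy {S A : Type*} [Fintype A] (pi : S → A → ℝ) : Prop :=
  (∀ s a, 0 ≤ pi s a) ∧ (∀ s, ∑ a, pi s a = 1)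

def IsKernel {S A : Type*} [Fintype S] (p : S → A → S → ℝ) : Prop :=
  (∀ s a s', 0 ≤ p s a s') ∧ (∀ s a, ∑ s', p s a s' = 1)

noncomputable def klPen {S A : Type*} [Fintype A]
    (πb π : S → A → ℝ) (s : S) : ℝ :=
  ∑ a, π s a * Real.log (π s a / πb s a)

noncomputable def bellman {S A : Type*} [Fintype S] [Fintype A]
    (p : S → A → S → ℝ) (r : S → A → ℝ) (γ τ : ℝ) (πb π : S → A → ℝ)
    (q : S × A → ℝ) : S × A → ℝ :=
  fun sa => r sa.1 sa.2 + γ * ∑ s', p sa.1 sa.2 s' *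
    ((∑ a', π s' a' * q (s', a')) - τ * klPen πb π s')

noncomputable def supNorm {X : Type*} [Fintype X] [Nonempty X] (f : X → ℝ) : ℝ :=
  Finset.univ.sup' Finset.univ_nonempty (fun x => |f x|)

noncomputable def Jobj {S A : Type*} [Fintype A]
    (τ : ℝ) (πb : S → A → ℝ) (qd : S × A → ℝ) (πt : S → A → ℝ) (s : S) : ℝ :=
  (∑ a, πt s a * qd (s, a)) - τ * klPen πb πt s

theorem stmt9 {S A : Type*} [Fintype S] [Fintype A] [Nonempty S] [Nonempty A]
    (p : S → A → S → ℝ) (hp : IsKernel p)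
    (r : S → A → ℝ) (γ τ : ℝ) (hγ0 : 0 ≤ γ) (hγ1 : γ < 1) (hτ : 0 ≤ τ)
    (πb : S → A → ℝ) (hπb : IsPolicy πb) (hπbpos : ∀ s a, 0 < πb s a)
    (πk : ℕ → S → A → ℝ) (hπk : ∀ k, IsPolicy (πk k))
    (qd : ℕ → S × A → ℝ) (hqd : ∀ k, bellman p r γ τ πb (πk k) (qd k) = qd k)
    (hmax : ∀ k, ∀ s : S, ∀ πt : S → A → ℝ, IsPolicy πt →
      Jobj τ πb (qd k) πt s ≤ Jobj τ πb (qd k) (πk (k + 1)) s) :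
    ∀ k, ∀ sa : S × A, qd k sa ≤ qd (k + 1) sa := by
  intro k
  set π' := πk (k + 1) with hπ'
  set g : S × A → ℝ := fun sa => qd k sa - qd (k + 1) sa with hg
  set M : ℝ := Finset.univ.sup' Finset.univ_nonempty g with hM
  -- Step 1: qd k ≤ T^{π'} (qd k)
  have h1 : ∀ sa : S × A, qd k sa ≤ bellman p r γ τ πb π' (qd k) sa := by
    intro sa
    conv_lhs => rw [← hqd k]
    unfold bellman
    apply add_le_add le_rfl
    apply mul_le_mul_of_nonneg_left _ hγ0
    apply Finset.sum_le_sum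
    intro s' _
    exact mul_le_mul_of_nonneg_left (hmax k s' (πk k) (hπk k)) (hp.1 _ _ _)
  -- bound on weighted averages of g
  have hbound : ∀ s' : S, ∑ a', π' s' a' * g (s', a') ≤ M := by
    intro s'
    calc ∑ a', π' s' a' * g (s', a')
        ≤ ∑ a', π' s' a' * M :=
          Finset.sum_le_sum fun a' _ =>
            mul_le_mul_of_nonneg_left (Finset.le_sup' g (Finset.mem_univ _))
              ((hπk (k + 1)).1 s' a')
      _ = M := by rw [← Finset.sum_mul, (hπk (k + 1)).2 s', one_mul]
  -- Step 2: g sa ≤ γ * M for all sa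
  have h2 : ∀ sa : S × A, g sa ≤ γ * M := by
    intro sa
    have hfix : bellman p r γ τ πb π' (qd (k + 1)) sa = qd (k + 1) sa :=
      congrFun (hqd (k + 1)) sa
    have hdiff : bellman p r γ τ πb π' (qd k) sa - bellman p r γ τ πb π' (qd (k + 1)) sa
        = γ * ∑ s', p sa.1 sa.2 s' * ∑ a', π' s' a' * g (s', a') := by
      unfold bellman
      rw [show ∀ X Y : ℝ, (r sa.1 sa.2 + γ * X) - (r sa.1 sa.2 + γ * Y) = γ * (X - Y)
        from fun X Y => by ring]
      congr 1
      rw [← Finset.sum_sub_distrib]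
      apply Finset.sum_congr rfl
      intro s' _
      rw [← mul_sub]
      congr 1
      rw [sub_sub_sub_cancel_right, ← Finset.sum_sub_distrib]
      apply Finset.sum_congr rfl
      intro a' _
      rw [← mul_sub]
    have hsum : ∑ s', p sa.1 sa.2 s' * ∑ a', π' s' a' * g (s', a') ≤ M := by
      calc ∑ s', p sa.1 sa.2 s' * ∑ a', π' s' a' * g (s', a')
          ≤ ∑ s', p sa.1 sa.2 s' * M :=
            Finset.sum_le_sum fun s' _ =>
              mul_le_mul_of_nonneg_left (hbound s') (hp.1 _ _ _)
        _ = M := by rw [← Finset.sum_mul, hp.2 _ _, one_mul]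
    have : g sa ≤ bellman p r γ τ πb π' (qd k) sa - bellman p r γ τ πb π' (qd (k + 1)) sa := by
      simp only [hg]
      rw [hfix]
      exact sub_le_sub_right (h1 sa) _
    calc g sa ≤ γ * ∑ s', p sa.1 sa.2 s' * ∑ a', π' s' a' * g (s', a') := by
            rw [← hdiff]; exact this
      _ ≤ γ * M := mul_le_mul_of_nonneg_left hsum hγ0
  have hMle : M ≤ γ * M := Finset.sup'_le _ _ fun sa _ => h2 sa
  have hM0 : M ≤ 0 := by nlinarith
  intro sa
  have := le_trans (Finset.le_sup' g (Finset.mem_univ sa)) hM0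
  simpa [hg] using this
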